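/- Let φ be the Fibonacci morphism, f_k = φ^{k-1}(0), and p_n the n-th bispecial factor (f_n with last two letters removed). For all n ≥ 0: 1·φ(01)·φ²(1)·φ³(1)···φ^{2n+2}(1)·φ^{2n+3}(01) = 1·f_{2n+4}·f_{2n+5} = 1·p_{2n+6}·1·0·0, i.e., the word 1·φ(01)·φ²(1)···φ^{2n+2}(1)·φ^{2n+3}(01) equals d_{2n+6}·0 where d_m = 1·p_m·1 for even m. -/
import Mathlib


/-- The Fibonacci morphism on letters: φ(0)=01, φ(1)=0 (0 = `false`, 1 = `true`). -/
def phi : Bool → List Bool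
  | false => [false, true]
  | true  => [false]

/-- The Fibonacci morphism extended to words. -/
def phiW (w : List Bool) : List Bool := w.flatMap phi

/-- The finite Fibonacci words: `fibw n = φ^{n-1}(0)` for `n ≥ 1`. -/
def fibw (n : ℕ) : List Bool := phiW^[n - 1] [false]

/-- The bispecial factors of the Fibonacci word. -/
def pbis (n : ℕ) : List Bool := (fibw n).dropLast.dropLast

/-- The minimal forbidden words of the Fibonacci word:
`d n = 1 p_n 1` for even `n`, `d n = 0 p_n 0` for odd `n`. -/
def dF (n : ℕ) : List Bool :=
  if n % 2 = 0 then [true] ++ pbis n ++ [true] else [false] ++ pbis n ++ [false]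

lemma phiW_append (a b : List Bool) : phiW (a ++ b) = phiW a ++ phiW b := by
  simp [phiW]

lemma iter_append (k : ℕ) (a b : List Bool) :
    phiW^[k] (a ++ b) = phiW^[k] a ++ phiW^[k] b := by
  induction k generalizing a b with
  | zero => rfl
  | succ k ih => simp [Function.iterate_succ_apply, phiW_append, ih]

lemma T_succ (m : ℕ) : phiW^[m + 1] [true] = phiW^[m] [false] := by
  rw [Function.iterate_succ_apply]; rfl

lemma F_succ (m : ℕ) :
    phiW^[m + 1] [false] = phiW^[m] [false] ++ phiW^[m] [true] := by
  rw [Function.iterate_succ_apply]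
  show phiW^[m] ([false] ++ [true]) = _
  exact iter_append m _ _

lemma F_rec (m : ℕ) :
    phiW^[m + 2] [false] = phiW^[m + 1] [false] ++ phiW^[m] [false] := by
  rw [F_succ (m + 1), T_succ]

/-- Telescoping: f₂ f₁ · f₂ f₃ ⋯ f_{k+1} = f_{k+3}. -/
lemma key1 (k : ℕ) :
    [false, true, false] ++
      ((List.range k).map (fun j => phiW^[j + 1] [false])).flatten
      = phiW^[k + 2] [false] := by
  induction k with
  | zero => decide
  | succ k ih =>
    rw [List.range_succ, List.map_append, List.flatten_append, ← List.append_assoc, ih]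
    simp [F_rec (k + 1)]

lemma parity_flip (m : ℕ) : ((m + 1) % 2 == 0) = !(m % 2 == 0) := by
  rcases Nat.mod_two_eq_zero_or_one m with h | h <;> simp [Nat.add_mod, h]

/-- Near-commutation: f_{m+2}f_{m+1} and f_{m+1}f_{m+2} share a prefix and end in
swapped last two letters. -/
lemma key2 (m : ℕ) : ∃ P : List Bool,
    phiW^[m + 1] [false] ++ phiW^[m] [false]
      = P ++ [(m % 2 == 0), !(m % 2 == 0)] ∧
    phiW^[m] [false] ++ phiW^[m + 1] [false]
      = P ++ [!(m % 2 == 0), (m % 2 == 0)] := by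
  induction m with
  | zero => exact ⟨[false], by decide, by decide⟩
  | succ m ih =>
    obtain ⟨P, h1, h2⟩ := ih
    refine ⟨phiW^[m + 1] [false] ++ P, ?_, ?_⟩ <;>
        rw [parity_flip] <;> simp only [Bool.not_not] <;> rw [F_rec m]
    · rw [List.append_assoc, h2, ← List.append_assoc]
    · rw [h1, ← List.append_assoc]

theorem fib_expansion_identity_even (n : ℕ) :
    [true] ++ phiW [false, true] ++
        ((List.range (2 * n + 1)).map (fun j => phiW^[j + 2] [true])).flatten ++
        phiW^[2 * n + 3] [false, true]
      = [true] ++ fibw (2 * n + 4) ++ fibw (2 * n + 5) ∧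
    [true] ++ fibw (2 * n + 4) ++ fibw (2 * n + 5) = dF (2 * n + 6) ++ [false] := by
  have hfib : ∀ m : ℕ, fibw (m + 1) = phiW^[m] [false] := fun m => rfl
  constructor
  · have hmap : ((List.range (2 * n + 1)).map (fun j => phiW^[j + 2] [true])).flatten
        = ((List.range (2 * n + 1)).map (fun j => phiW^[j + 1] [false])).flatten := by
      exact congrArg List.flatten (List.map_congr_left (fun j _ => T_succ (j + 1)))
    have h01 : phiW^[2 * n + 3] [false, true]
        = phiW^[2 * n + 3] [false] ++ phiW^[2 * n + 2] [false] := by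
      rw [show ([false, true] : List Bool) = [false] ++ [true] from rfl,
        iter_append, T_succ]
    have hphi : phiW [false, true] = [false, true, false] := by decide
    rw [hmap, h01, hphi, List.append_assoc [true], key1 (2 * n + 1)]
    show [true] ++ (phiW^[2 * n + 3] [false] ++
        (phiW^[2 * n + 3] [false] ++ phiW^[2 * n + 2] [false]))
      = [true] ++ phiW^[2 * n + 4 - 1] [false] ++ phiW^[2 * n + 5 - 1] [false]
    rw [show 2 * n + 4 - 1 = 2 * n + 3 by omega, show 2 * n + 5 - 1 = 2 * n + 4 by omega,
      show 2 * n + 4 = 2 * n + 2 + 2 by omega, F_rec (2 * n + 2),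
      show 2 * n + 2 + 1 = 2 * n + 3 by omega, List.append_assoc]
  · obtain ⟨P, h1, h2⟩ := key2 (2 * n + 3)
    have hpar : ((2 * n + 3) % 2 == 0) = false := by
      have h : (2 * n + 3) % 2 = 1 := by omega
      simp [h]
    rw [hpar] at h1 h2
    simp only [Bool.not_false] at h1 h2
    rw [show 2 * n + 3 + 1 = 2 * n + 4 by omega] at h1 h2
    have heven : (2 * n + 6) % 2 = 0 := by omega
    have h5 : phiW^[2 * n + 5] [false] = P ++ [false, true] := by
      rw [show 2 * n + 5 = 2 * n + 3 + 2 by omega, F_rec,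
        show 2 * n + 3 + 1 = 2 * n + 4 by omega, h1]
    have hp : pbis (2 * n + 6) = P := by
      show (fibw (2 * n + 6)).dropLast.dropLast = P
      show (phiW^[2 * n + 6 - 1] [false]).dropLast.dropLast = P
      rw [show 2 * n + 6 - 1 = 2 * n + 5 by omega, h5,
        show (P ++ [false, true] : List Bool) = (P ++ [false]) ++ [true] by simp,
        List.dropLast_concat, List.dropLast_concat]
    rw [dF, if_pos heven, hp]
    show [true] ++ phiW^[2 * n + 4 - 1] [false] ++ phiW^[2 * n + 5 - 1] [false] = _
    rw [show 2 * n + 4 - 1 = 2 * n + 3 by omega, show 2 * n + 5 - 1 = 2 * n + 4 by omega]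
    simp only [List.append_assoc]
    rw [h2]
    simp
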